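/- Let Q : ℕ → ℕ ∪ {0} with Q(k) < k, and define cutting times by S_0 = 1 and S_k = S_{k-1} + S_{Q(k)}. Let E = {e ∈ {0,1}^ℕ : e_i = 1 implies e_j = 0 for all Q(i+1) ≤ j < i}. Then for every e ∈ E and every j ≥ 0, one has e_0 S_0 + e_1 S_1 + ... + e_j S_j < S_{j+1}. -/
import Mathlib


open Finset

/-- In the enumeration scale based on the cutting times `S_k` (with kneading map `Q`),
every admissible code `e` satisfies `e_0 S_0 + ... + e_j S_j < S_{j+1}`. -/
theorem enumeration_scale_partial_sums_lt
    (Q : ℕ → ℕ) (hQ : ∀ k : ℕ, Q (k + 1) ≤ k)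
    (S : ℕ → ℕ) (hS0 : S 0 = 1) (hS : ∀ k : ℕ, S (k + 1) = S k + S (Q (k + 1)))
    (e : ℕ → ℕ) (he01 : ∀ i, e i ≤ 1)
    (hadm : ∀ i, e i = 1 → ∀ j, Q (i + 1) ≤ j → j < i → e j = 0) :
    ∀ j : ℕ, (∑ i ∈ Finset.range (j + 1), e i * S i) < S (j + 1) := by
  -- S is positive and monotone (in steps)
  have hpos : ∀ k, 1 ≤ S k := by
    intro k
    induction k with
    | zero => omega
    | succ n ih => rw [hS]; omega
  have hmono : ∀ k, S k ≤ S (k + 1) := by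
    intro k; rw [hS]; omega
  intro j
  induction j using Nat.strong_induction_on with
  | _ j ih =>
  cases j with
  | zero =>
    rw [Finset.sum_range_one, hS 0, hS0, mul_one]
    have := he01 0
    have := hpos (Q (0 + 1))
    omega
  | succ k =>
    rw [Finset.sum_range_succ]
    rcases Nat.le_one_iff_eq_zero_or_eq_one.mp (he01 (k + 1)) with h0 | h1
    · have := ih k (Nat.lt_succ_self k)
      have := hmono (k + 1)
      rw [h0]
      omega
    · have hz : ∀ i, Q (k + 2) ≤ i → i < k + 1 → e i = 0 := hadm (k + 1) h1
      have hqle : Q (k + 2) ≤ k + 1 := hQ (k + 1)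
      have hsum : (∑ i ∈ Finset.range (k + 1), e i * S i)
          = ∑ i ∈ Finset.range (Q (k + 2)), e i * S i := by
        rw [← Finset.sum_range_add_sum_Ico _ hqle]
        have : (∑ i ∈ Finset.Ico (Q (k + 2)) (k + 1), e i * S i) = 0 := by
          apply Finset.sum_eq_zero
          intro i hi
          rw [Finset.mem_Ico] at hi
          rw [hz i hi.1 hi.2]; ring
        omega
      have hlt : (∑ i ∈ Finset.range (Q (k + 2)), e i * S i) < S (Q (k + 2)) := by
        rcases Nat.eq_zero_or_pos (Q (k + 2)) with h | h
        · rw [h]; simp [hS0]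
        · obtain ⟨m, hm⟩ := Nat.exists_eq_succ_of_ne_zero (Nat.pos_iff_ne_zero.mp h)
          rw [hm]
          exact ih m (by omega)
      have h2 : S (k + 1 + 1) = S (k + 1) + S (Q (k + 2)) := hS (k + 1)
      rw [hsum, h1, one_mul]
      omega
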